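/- For every real x, |R(x)|² ≤ exp(2·|𝓜|/C₁). -/

import Mathlib

open Real Filter Finset

lemma poly_key {c : ℝ} (hc : 0 < c) (hc2 : c ≤ 2) :
    0 ≤ 1/2 + 11/8*c - 161/48*c^2 + 887/384*c^3 - 1013/1600*c^4 + 347/3200*c^5
      - 7/400*c^6 - 3/1600*c^7 := by
  nlinarith [sq_nonneg c, sq_nonneg (c-1), sq_nonneg (c^2-c), sq_nonneg (c^2 - 2*c),
    sq_nonneg (c^3 - c^2), mul_nonneg (mul_nonneg hc.le hc.le) hc.le,
    mul_nonneg (sub_nonneg.2 hc2) (sq_nonneg (c^2 - c)),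
    mul_nonneg (sub_nonneg.2 hc2) (sq_nonneg (c^2 - 2*c)),
    mul_nonneg (sub_nonneg.2 hc2) (sq_nonneg (c^3 - 2*c^2)),
    mul_nonneg (mul_nonneg (sub_nonneg.2 hc2) (sub_nonneg.2 hc2)) (sq_nonneg c),
    mul_nonneg (mul_nonneg (sub_nonneg.2 hc2) (sub_nonneg.2 hc2)) (sq_nonneg (c^2)),
    mul_nonneg (mul_nonneg (sub_nonneg.2 hc2) (sub_nonneg.2 hc2)) (sq_nonneg (c^2-c))]

lemma exp_key {c : ℝ} (hc : 0 < c) (hc2 : c ≤ 2) :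
    Real.exp (-(1/c)) + Real.exp (-(c/2)) ≤ 1 := by
  have hc' : (0:ℝ) < 1/c := by positivity
  -- lower bound for exp (1/c)
  have hA : 1 + c⁻¹ + (c^2)⁻¹/2 + (c^3)⁻¹/6 ≤ Real.exp c⁻¹ := by
    have h := Real.sum_le_exp_of_nonneg (by positivity : (0:ℝ) ≤ c⁻¹) 4
    rw [Finset.sum_range_succ, Finset.sum_range_succ, Finset.sum_range_succ,
      Finset.sum_range_succ, Finset.sum_range_zero] at h
    norm_num [Nat.factorial] at h
    linarith
  have hSpos : (0:ℝ) < 1 + c⁻¹ + (c^2)⁻¹/2 + (c^3)⁻¹/6 := by positivity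
  have hA2 : Real.exp (-(1/c)) ≤ (1 + c⁻¹ + (c^2)⁻¹/2 + (c^3)⁻¹/6)⁻¹ := by
    rw [one_div, Real.exp_neg]
    exact inv_anti₀ hSpos hA
  -- upper bound for exp (-(c/2))
  have hB : Real.exp (-(c/2)) ≤ 1 - c/2 + c^2/8 - c^3/48 + c^4/384 + c^5/3200 := by
    have hx : |(-(c/2))| ≤ 1 := by
      rw [abs_neg, abs_of_nonneg (by linarith)]; linarith
    have h := Real.exp_bound hx (n := 5) (by norm_num)
    rw [Finset.sum_range_succ, Finset.sum_range_succ, Finset.sum_range_succ,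
      Finset.sum_range_succ, Finset.sum_range_succ, Finset.sum_range_zero,
      abs_neg, abs_of_nonneg (by linarith : (0:ℝ) ≤ c/2)] at h
    norm_num [Nat.factorial] at h
    have h' := (abs_sub_le_iff.1 h).1
    nlinarith [h']
  -- combine
  have hS_eq : 1 + c⁻¹ + (c^2)⁻¹/2 + (c^3)⁻¹/6 = (6*c^3+6*c^2+3*c+1)/(6*c^3) := by
    field_simp; ring
  have hkey : (1 + c⁻¹ + (c^2)⁻¹/2 + (c^3)⁻¹/6)⁻¹
      ≤ 1 - (1 - c/2 + c^2/8 - c^3/48 + c^4/384 + c^5/3200) := by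
    rw [hS_eq, inv_div, div_le_iff₀ (by positivity)]
    have hq := poly_key hc hc2
    nlinarith [mul_nonneg hc.le hq]
  linarith

/-- The resonator `R(x) = ∏_{λ ∈ 𝓜} (1 − e^{−λ/(2α)} e^{iλx})⁻¹`. -/
noncomputable def resonator (α : ℝ) (𝓜 : Finset ℝ) (x : ℝ) : ℂ :=
  ∏ l ∈ 𝓜, (1 - (Real.exp (-l / (2 * α)) : ℂ) * Complex.exp ((l * x : ℝ) * Complex.I))⁻¹

theorem resonator_sup_bound (α C₁ : ℝ) (hα : 0 < α) (hC₁ : 0 < C₁) (hC₁2 : C₁ ≤ 2)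
    (𝓜 : Finset ℝ) (h𝓜 : ∀ l ∈ 𝓜, C₁ * α ≤ l) (x : ℝ) :
    ‖resonator α 𝓜 x‖ ^ 2 ≤ Real.exp (2 * 𝓜.card / C₁) := by
  have hmain : ‖resonator α 𝓜 x‖ ≤ Real.exp (𝓜.card / C₁) := by
    rw [resonator, norm_prod]
    calc ∏ l ∈ 𝓜, ‖(1 - (Real.exp (-l / (2 * α)) : ℂ)
          * Complex.exp ((l * x : ℝ) * Complex.I))⁻¹‖
        ≤ ∏ l ∈ 𝓜, Real.exp (1 / C₁) := by
          apply Finset.prod_le_prod (fun l _ => by positivity)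
          intro l hl
          have hll := h𝓜 l hl
          have hlpos : 0 < l := lt_of_lt_of_le (by positivity) hll
          set z : ℂ := (Real.exp (-l / (2 * α)) : ℂ) * Complex.exp ((l * x : ℝ) * Complex.I)
            with hz
          have habs : ‖z‖ = Real.exp (-l / (2 * α)) := by
            rw [hz, norm_mul, Complex.norm_exp_ofReal_mul_I, mul_one, Complex.norm_real, Real.norm_eq_abs,
              abs_of_pos (Real.exp_pos _)]
          have hle : Real.exp (-l / (2 * α)) ≤ Real.exp (-(C₁/2)) := by
            apply Real.exp_le_exp.2
            rw [div_le_iff₀ (by positivity)]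
            nlinarith
          have h1 : (1:ℝ) - Real.exp (-l/(2*α)) ≤ ‖1 - z‖ := by
            have := norm_sub_norm_le (1:ℂ) z
            simpa [habs] using this
          have hlow : Real.exp (-(1/C₁)) ≤ ‖1 - z‖ := by
            have := exp_key hC₁ hC₁2
            linarith
          rw [norm_inv]
          rw [inv_le_iff_one_le_mul₀ (lt_of_lt_of_le (Real.exp_pos _) hlow)]
          calc (1:ℝ) = Real.exp (1/C₁) * Real.exp (-(1/C₁)) := by
                rw [← Real.exp_add]; ring_nf; rw [Real.exp_zero]
            _ ≤ _ := mul_le_mul_of_nonneg_left hlow (Real.exp_pos _).le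
      _ = Real.exp (𝓜.card / C₁) := by
          rw [Finset.prod_const, ← Real.exp_nat_mul]
          ring_nf
  calc ‖resonator α 𝓜 x‖ ^ 2 ≤ Real.exp (𝓜.card / C₁) ^ 2 := by
        apply pow_le_pow_left₀ (norm_nonneg _) hmain
    _ = Real.exp (2 * 𝓜.card / C₁) := by
        rw [sq, ← Real.exp_add]; ring_nf
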